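/- If R_0 > 1, the starvation relation ≻ is a strict partial order (irreflexive, asymmetric, and transitive) on the set of stages. -/
import Mathlib


open scoped ENNReal

/-- Product of the follow-on constants over the cyclic interval `[j,k)` in `ZMod n`
(the empty product for `j = k`). -/
noncomputable def cycProd {n : ℕ} (M : ZMod n → ℝ≥0∞) (j k : ZMod n) : ℝ≥0∞ :=
  ∏ i ∈ Finset.range ((k - j).val), M (j + (i : ZMod n))

/-- The starvation relation `j ≻ k` : `b j` is finite and `b j * M_{jk} < b k`. -/
def Starves {n : ℕ} (M : ZMod n → ℝ≥0∞) (b : ZMod n → ℝ≥0∞) (j k : ZMod n) : Prop :=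
  b j < ⊤ ∧ b j * cycProd M j k < b k

lemma cycProd_self {n : ℕ} (M : ZMod n → ℝ≥0∞) (j : ZMod n) : cycProd M j j = 1 := by
  simp [cycProd]

lemma prod_cycle {n : ℕ} [NeZero n] (M : ZMod n → ℝ≥0∞) (j : ZMod n) :
    ∏ i ∈ Finset.range n, M (j + (i : ZMod n)) = ∏ x : ZMod n, M x := by
  rw [← Fin.prod_univ_eq_prod_range (fun i => M (j + (i : ZMod n))) n]
  refine Fintype.prod_bijective (fun i : Fin n => j + (i : ZMod n)) ?_ _ _ (fun i => rfl)
  rw [Fintype.bijective_iff_injective_and_card]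
  constructor
  · intro i i' h
    have : ((i : ℕ) : ZMod n) = ((i' : ℕ) : ZMod n) := by
      have := add_left_cancel h
      exact_mod_cast this
    have hv := congrArg ZMod.val this
    rwa [ZMod.val_natCast_of_lt i.isLt, ZMod.val_natCast_of_lt i'.isLt, Fin.val_inj] at hv
  · simp [ZMod.card]

lemma cycProd_mul {n : ℕ} [NeZero n] (M : ZMod n → ℝ≥0∞) (j k l : ZMod n) :
    cycProd M j k * cycProd M k l = cycProd M j l ∨
    cycProd M j k * cycProd M k l = (∏ x : ZMod n, M x) * cycProd M j l := by
  set a := (k - j).val with ha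
  set c := (l - k).val with hc
  have hk : ((a : ℕ) : ZMod n) = k - j := ZMod.natCast_rightInverse (k - j)
  have key : cycProd M j k * cycProd M k l = ∏ i ∈ Finset.range (a + c), M (j + (i : ZMod n)) := by
    rw [Finset.prod_range_add]
    congr 1
    refine Finset.prod_congr rfl fun i _ => ?_
    congr 1
    push_cast
    rw [hk]; ring
  have hmod : (l - j).val = (a + c) % n := by
    have : l - j = (k - j) + (l - k) := by ring
    rw [this, ZMod.val_add]
  rcases lt_or_ge (a + c) n with h | h
  · left
    rw [key]
    have : (l - j).val = a + c := by rw [hmod, Nat.mod_eq_of_lt h]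
    rw [cycProd, this]
  · right
    have h2 : a + c < 2 * n := by
      have := ZMod.val_lt (k - j)
      have := ZMod.val_lt (l - k)
      omega
    have hv : (l - j).val = a + c - n := by
      rw [hmod, Nat.mod_eq_sub_mod h, Nat.mod_eq_of_lt (by omega)]
    have hsum : a + c = (l - j).val + n := by omega
    rw [key, hsum, Finset.prod_range_add, mul_comm]
    congr 1
    rw [← prod_cycle M (j + ((l - j).val : ZMod n))]
    refine Finset.prod_congr rfl fun i _ => ?_
    congr 1
    push_cast
    ring

lemma cycProd_le_mul {n : ℕ} [NeZero n] (M : ZMod n → ℝ≥0∞)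
    (hR0 : 1 < ∏ j : ZMod n, M j) (j k l : ZMod n) :
    cycProd M j l ≤ cycProd M j k * cycProd M k l := by
  rcases cycProd_mul M j k l with h | h
  · rw [h]
  · rw [h]
    calc cycProd M j l = 1 * cycProd M j l := (one_mul _).symm
    _ ≤ (∏ x : ZMod n, M x) * cycProd M j l := mul_le_mul_left hR0.le _

/-- If `R₀ > 1`, the starvation relation is a strict partial order on the stages:
irreflexive, asymmetric and transitive. -/
theorem starvation_strict_partial_order {n : ℕ} [NeZero n]
    (M : ZMod n → ℝ≥0∞) (hM : ∀ j, 0 < M j ∧ M j < ⊤)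
    (b : ZMod n → ℝ≥0∞) (hb : ∀ j, 0 < b j)
    (hR0 : 1 < ∏ j : ZMod n, M j) :
    (∀ j : ZMod n, ¬ Starves M b j j) ∧
    (∀ j k : ZMod n, Starves M b j k → ¬ Starves M b k j) ∧
    (∀ j k l : ZMod n, Starves M b j k → Starves M b k l → Starves M b j l) := by
  have hchain : ∀ j k l : ZMod n, Starves M b j k → Starves M b k l →
      b j * (cycProd M j k * cycProd M k l) < b l := by
    intro j k l ⟨hjfin, hjk⟩ ⟨hkfin, hkl⟩
    calc b j * (cycProd M j k * cycProd M k l)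
        = (b j * cycProd M j k) * cycProd M k l := (mul_assoc _ _ _).symm
      _ ≤ b k * cycProd M k l := mul_le_mul_left hjk.le _
      _ < b l := hkl
  have hirr : ∀ j : ZMod n, ¬ Starves M b j j := by
    intro j ⟨_, hlt⟩
    rw [cycProd_self, mul_one] at hlt
    exact lt_irrefl _ hlt
  refine ⟨hirr, ?_, ?_⟩
  · intro j k hjk hkj
    have h := hchain j k j hjk hkj
    have h1 : 1 ≤ cycProd M j k * cycProd M k j := by
      rcases cycProd_mul M j k j with heq | heq <;> rw [heq, cycProd_self]
      · rw [mul_one]; exact hR0.le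
    have : b j ≤ b j * (cycProd M j k * cycProd M k j) := by
      calc b j = b j * 1 := (mul_one _).symm
        _ ≤ _ := mul_le_mul_right h1 _
    exact absurd (lt_of_le_of_lt this h) (lt_irrefl _)
  · intro j k l hjk hkl
    refine ⟨hjk.1, lt_of_le_of_lt ?_ (hchain j k l hjk hkl)⟩
    exact mul_le_mul_right (cycProd_le_mul M hR0 j k l) _
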